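/- Fix n ≥ 2, α ∈ (0,n), and m > 0. For all Lebesgue measurable sets E, F ⊂ ℝⁿ with |E| ≤ |F| = m, one has |V(E) − V(F)| ≤ (2 n ω_n^{α/n} / (n−α)) · m^{(n−α)/n} · |E △ F|, where E △ F denotes the symmetric difference of E and F. -/

import Mathlib

open MeasureTheory Metric Set Bornology
open scoped ENNReal NNReal Topology

/-- The Riesz energy `V(E) = ∫_E ∫_E |x-y|^{-α} dx dy` of a set `E ⊆ ℝⁿ`. -/
noncomputable def rieszEnergy {n : ℕ} (α : ℝ) (E : Set (EuclideanSpace ℝ (Fin n))) : ℝ :=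
  ∫ x in E, ∫ y in E, ‖x - y‖ ^ (-α)

/-- `ω_k`: the Lebesgue measure of the unit ball in `ℝ^k`. -/
noncomputable def unitBallVol (k : ℕ) : ℝ :=
  (volume (ball (0 : EuclideanSpace ℝ (Fin k)) 1)).toReal

variable {n : ℕ}

lemma kernel_meas1 (α : ℝ) (x : EuclideanSpace ℝ (Fin n)) :
    Measurable (fun y : EuclideanSpace ℝ (Fin n) => ‖x - y‖ ^ (-α)) := by fun_prop

lemma unitBallVol_pos (hn : 0 < n) : 0 < unitBallVol n :=
  ENNReal.toReal_pos (measure_ball_pos _ _ one_pos).ne' measure_ball_lt_top.ne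

lemma volume_unitBall :
    volume (ball (0 : EuclideanSpace ℝ (Fin n)) 1) = ENNReal.ofReal (unitBallVol n) :=
  (ENNReal.ofReal_toReal measure_ball_lt_top.ne).symm

lemma lintegral_closedBall_le (hn : 0 < n) {α : ℝ} (hα₀ : 0 < α) (hα₁ : α < n)
    (x : EuclideanSpace ℝ (Fin n)) {r : ℝ} (hr : 0 < r) :
    ∫⁻ y in closedBall x r, ENNReal.ofReal (‖x - y‖ ^ (-α)) ≤
      ENNReal.ofReal ((n / ((n : ℝ) - α)) * unitBallVol n * r ^ ((n : ℝ) - α)) := by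
  have hα₁' : (α : ℝ) < (n : ℝ) := hα₁
  have hnα : (0:ℝ) < (n : ℝ) - α := by linarith
  have hfr : Module.finrank ℝ (EuclideanSpace ℝ (Fin n)) = n := finrank_euclideanSpace_fin
  set ω := unitBallVol n with hω
  have hω0 : 0 < ω := unitBallVol_pos hn
  have hB : volume (ball (0 : EuclideanSpace ℝ (Fin n)) 1) = ENNReal.ofReal ω :=
    volume_unitBall
  set a : ℝ := (-α⁻¹) * n with ha
  have ha1 : a < -1 := by
    rw [ha, neg_mul, neg_lt_neg_iff, lt_inv_mul_iff₀ hα₀]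
    simpa using hα₁
  have ha0 : a + 1 < 0 := by linarith
  set t₀ : ℝ := r ^ (-α) with ht₀
  have ht₀0 : 0 < t₀ := Real.rpow_pos_of_pos hr _
  -- layer cake
  rw [lintegral_eq_lintegral_meas_le _ (ae_of_all _ fun y => Real.rpow_nonneg (norm_nonneg _) _)
      ((kernel_meas1 α x).aemeasurable)]
  -- pointwise bound on the superlevel measure
  have hpt : ∀ t ∈ Ioi (0:ℝ),
      (volume.restrict (closedBall x r)) {y | t ≤ ‖x - y‖ ^ (-α)} ≤
        ENNReal.ofReal (min (t ^ (-α⁻¹)) r ^ n) * ENNReal.ofReal ω := by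
    intro t ht
    rw [Measure.restrict_apply (measurableSet_le measurable_const (kernel_meas1 α x))]
    have hsub : {y | t ≤ ‖x - y‖ ^ (-α)} ∩ closedBall x r ⊆
        closedBall x (min (t ^ (-α⁻¹)) r) := by
      rintro y ⟨hy1, hy2⟩
      simp only [mem_closedBall, le_min_iff]
      refine ⟨?_, hy2⟩
      have hy1' : t ≤ ‖x - y‖ ^ (-α) := hy1
      have hxy : 0 < ‖x - y‖ := by
        rcases eq_or_lt_of_le (norm_nonneg (x - y)) with h | h
        · exfalso
          rw [← h, Real.zero_rpow (by linarith : -α ≠ 0)] at hy1'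
          exact absurd (ht.out.trans_le hy1') (lt_irrefl 0)
        · exact h
      have hmono := Real.rpow_le_rpow_of_nonpos ht.out hy1'
        (neg_nonpos.2 (inv_nonneg.2 hα₀.le))
      calc dist y x = ‖x - y‖ := by rw [dist_comm, dist_eq_norm]
        _ = (‖x - y‖ ^ (-α)) ^ (-α⁻¹) := by
            rw [← Real.rpow_mul (norm_nonneg _), neg_mul_neg,
              mul_inv_cancel₀ hα₀.ne', Real.rpow_one]
        _ ≤ t ^ (-α⁻¹) := hmono
    calc volume ({y | t ≤ ‖x - y‖ ^ (-α)} ∩ closedBall x r)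
        ≤ volume (closedBall x (min (t ^ (-α⁻¹)) r)) := measure_mono hsub
      _ = ENNReal.ofReal (min (t ^ (-α⁻¹)) r ^ Module.finrank ℝ (EuclideanSpace ℝ (Fin n))) *
            volume (ball (0 : EuclideanSpace ℝ (Fin n)) 1) :=
          Measure.addHaar_closedBall _ _ (le_min (Real.rpow_nonneg (le_of_lt ht) _) hr.le)
      _ = ENNReal.ofReal (min (t ^ (-α⁻¹)) r ^ n) * ENNReal.ofReal ω := by rw [hfr, hB]
  calc ∫⁻ t in Ioi 0, (volume.restrict (closedBall x r)) {y | t ≤ ‖x - y‖ ^ (-α)}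
      ≤ ∫⁻ t in Ioi 0, ENNReal.ofReal (min (t ^ (-α⁻¹)) r ^ n) * ENNReal.ofReal ω :=
        setLIntegral_mono' measurableSet_Ioi hpt
    _ ≤ ∫⁻ t in Ioc 0 t₀ ∪ Ioi t₀, ENNReal.ofReal (min (t ^ (-α⁻¹)) r ^ n) * ENNReal.ofReal ω :=
        lintegral_mono_set Ioi_subset_Ioc_union_Ioi
    _ ≤ (∫⁻ t in Ioc 0 t₀, ENNReal.ofReal (min (t ^ (-α⁻¹)) r ^ n) * ENNReal.ofReal ω)
        + ∫⁻ t in Ioi t₀, ENNReal.ofReal (min (t ^ (-α⁻¹)) r ^ n) * ENNReal.ofReal ω :=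
        lintegral_union_le _ _ _
    _ ≤ ENNReal.ofReal (r ^ n * ω * t₀) + ENNReal.ofReal (ω * (-t₀ ^ (a + 1) / (a + 1))) := by
        gcongr ?_ + ?_
        · calc ∫⁻ t in Ioc 0 t₀, ENNReal.ofReal (min (t ^ (-α⁻¹)) r ^ n) * ENNReal.ofReal ω
              ≤ ∫⁻ _ in Ioc 0 t₀, ENNReal.ofReal (r ^ n) * ENNReal.ofReal ω := by
                refine setLIntegral_mono' measurableSet_Ioc fun t ht => ?_
                exact mul_le_mul_left (ENNReal.ofReal_le_ofReal
                  (pow_le_pow_left₀ (le_min (Real.rpow_nonneg ht.1.le _) hr.le)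
                    (min_le_right _ _) n)) _
            _ = ENNReal.ofReal (r ^ n) * ENNReal.ofReal ω * volume (Ioc (0:ℝ) t₀) :=
                setLIntegral_const _ _
            _ = ENNReal.ofReal (r ^ n * ω * t₀) := by
                rw [Real.volume_Ioc, sub_zero, ← ENNReal.ofReal_mul (by positivity),
                  ← ENNReal.ofReal_mul (by positivity)]
        · calc ∫⁻ t in Ioi t₀, ENNReal.ofReal (min (t ^ (-α⁻¹)) r ^ n) * ENNReal.ofReal ω
              ≤ ∫⁻ t in Ioi t₀, ENNReal.ofReal (t ^ a) * ENNReal.ofReal ω := by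
                refine setLIntegral_mono' measurableSet_Ioi fun t ht => ?_
                have ht0 : (0:ℝ) < t := ht₀0.trans ht
                refine mul_le_mul_left (ENNReal.ofReal_le_ofReal ?_) _
                calc min (t ^ (-α⁻¹)) r ^ n ≤ (t ^ (-α⁻¹)) ^ n :=
                      pow_le_pow_left₀ (le_min (Real.rpow_nonneg ht0.le _) hr.le)
                        (min_le_left _ _) n
                  _ = t ^ a := by
                      rw [← Real.rpow_natCast (t ^ (-α⁻¹)) n, ← Real.rpow_mul ht0.le, ha]
            _ = (∫⁻ t in Ioi t₀, ENNReal.ofReal (t ^ a)) * ENNReal.ofReal ω :=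
                lintegral_mul_const'' _ ((by fun_prop : Measurable fun t : ℝ => ENNReal.ofReal (t ^ a)).aemeasurable)
            _ = ENNReal.ofReal (-t₀ ^ (a + 1) / (a + 1)) * ENNReal.ofReal ω := by
                rw [← ofReal_integral_eq_lintegral_ofReal
                    (integrableOn_Ioi_rpow_of_lt ha1 ht₀0)
                    ((ae_restrict_iff' measurableSet_Ioi).2 (ae_of_all _ fun t ht =>
                      Real.rpow_nonneg (ht₀0.trans ht).le _)),
                  integral_Ioi_rpow_of_lt ha1 ht₀0]
            _ = ENNReal.ofReal (ω * (-t₀ ^ (a + 1) / (a + 1))) := by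
                have h1 : (0:ℝ) ≤ -t₀ ^ (a + 1) / (a + 1) := by
                  apply le_of_lt
                  apply div_pos_of_neg_of_neg _ ha0
                  simp only [Left.neg_neg_iff]
                  exact Real.rpow_pos_of_pos ht₀0 _
                rw [← ENNReal.ofReal_mul h1, mul_comm]
    _ = ENNReal.ofReal (r ^ n * ω * t₀ + ω * (-t₀ ^ (a + 1) / (a + 1))) := by
        have h1 : (0:ℝ) < -t₀ ^ (a + 1) / (a + 1) := by
          apply div_pos_of_neg_of_neg
          · simp only [Left.neg_neg_iff]
            exact Real.rpow_pos_of_pos ht₀0 _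
          · exact ha0
        rw [← ENNReal.ofReal_add (by positivity) (by positivity)]
    _ ≤ ENNReal.ofReal ((n / ((n : ℝ) - α)) * ω * r ^ ((n : ℝ) - α)) := by
        apply ENNReal.ofReal_le_ofReal
        apply le_of_eq
        have e1 : r ^ n * t₀ = r ^ ((n:ℝ) - α) := by
          rw [← Real.rpow_natCast r n, ht₀, ← Real.rpow_add hr, sub_eq_add_neg]
        have e2 : t₀ ^ (a + 1) = r ^ ((n:ℝ) - α) := by
          rw [ht₀, ← Real.rpow_mul hr.le]
          congr 1
          rw [ha]
          field_simp
          ring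
        rw [mul_right_comm, e1, e2, ha]
        have hα : α ≠ 0 := hα₀.ne'
        have h3 : -(n:ℝ) + α ≠ 0 := by intro h; exact hnα.ne' (by linarith)
        have h2 : -α⁻¹ * (n:ℝ) + 1 ≠ 0 := by
          have : -α⁻¹ * (n:ℝ) + 1 = (-(n:ℝ) + α) / α := by field_simp
          rw [this]
          exact div_ne_zero h3 hα
        field_simp [h3]
        ring

lemma pot_le (hn : 0 < n) {α : ℝ} (hα₀ : 0 < α) (hα₁ : α < n) {m : ℝ} (hm : 0 < m)
    {A : Set (EuclideanSpace ℝ (Fin n))} (hA : MeasurableSet A)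
    (hAm : volume A ≤ ENNReal.ofReal m) (x : EuclideanSpace ℝ (Fin n)) :
    ∫⁻ y in A, ENNReal.ofReal (‖x - y‖ ^ (-α)) ≤
      ENNReal.ofReal (((n : ℝ) / ((n : ℝ) - α)) * unitBallVol n ^ (α / (n : ℝ)) *
        m ^ (((n : ℝ) - α) / (n : ℝ))) := by
  have hα₁' : (α : ℝ) < (n : ℝ) := hα₁
  have hnα : (0:ℝ) < (n : ℝ) - α := by linarith
  have hn' : (0:ℝ) < (n : ℝ) := by exact_mod_cast hn
  have hfr : Module.finrank ℝ (EuclideanSpace ℝ (Fin n)) = n := finrank_euclideanSpace_fin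
  set ω := unitBallVol n with hωdef
  have hω0 : 0 < ω := unitBallVol_pos hn
  set r : ℝ := (m / ω) ^ ((n : ℝ)⁻¹) with hrdef
  have hr : 0 < r := Real.rpow_pos_of_pos (div_pos hm hω0) _
  have hrn : r ^ n * ω = m := by
    rw [hrdef, ← Real.rpow_natCast ((m / ω) ^ ((n:ℝ)⁻¹)) n, ← Real.rpow_mul (div_pos hm hω0).le,
      inv_mul_cancel₀ hn'.ne', Real.rpow_one]
    field_simp
  set B' := closedBall x r with hB'def
  have hB'vol : volume B' = ENNReal.ofReal m := by
    rw [hB'def, Measure.addHaar_closedBall _ _ hr.le, hfr, volume_unitBall,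
      ← ENNReal.ofReal_mul (by positivity), hrn]
  haveI : Nontrivial (EuclideanSpace ℝ (Fin n)) :=
    Module.nontrivial_of_finrank_pos (R := ℝ) (by rw [hfr]; exact hn)
  haveI : Filter.NeBot (𝓝[≠] (0 : EuclideanSpace ℝ (Fin n))) :=
    Module.punctured_nhds_neBot ℝ (EuclideanSpace ℝ (Fin n)) 0
  set K : EuclideanSpace ℝ (Fin n) → ℝ≥0∞ := fun y => ENNReal.ofReal (‖x - y‖ ^ (-α)) with hK
  -- measure comparison
  have hmeasle : volume (A \ B') ≤ volume (B' \ A) := by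
    have h1 : volume (A ∩ B') + volume (A \ B') = volume A :=
      measure_inter_add_diff A measurableSet_closedBall
    have h2 : volume (A ∩ B') + volume (B' \ A) = volume B' := by
      rw [inter_comm]; exact measure_inter_add_diff B' hA
    have hfin : volume (A ∩ B') ≠ ⊤ := by
      refine ne_top_of_le_ne_top ?_ (measure_mono inter_subset_right)
      rw [hB'vol]; exact ENNReal.ofReal_ne_top
    have : volume (A ∩ B') + volume (A \ B') ≤ volume (A ∩ B') + volume (B' \ A) := by
      rw [h1, h2, hB'vol]; exact hAm
    exact ENNReal.le_of_add_le_add_left hfin this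
  have hdisj1 : Disjoint (A ∩ B') (A \ B') := disjoint_sdiff_self_right.mono_left inter_subset_right
  have hdisj2 : Disjoint (A ∩ B') (B' \ A) := disjoint_sdiff_self_right.mono_left inter_subset_left
  calc ∫⁻ y in A, K y = ∫⁻ y in (A ∩ B') ∪ (A \ B'), K y := by rw [inter_union_diff]
    _ = (∫⁻ y in A ∩ B', K y) + ∫⁻ y in A \ B', K y :=
        lintegral_union (hA.diff measurableSet_closedBall) hdisj1
    _ ≤ (∫⁻ y in A ∩ B', K y) + ∫⁻ y in B' \ A, K y := by
        gcongr (∫⁻ y in A ∩ B', K y) + ?_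
        calc ∫⁻ y in A \ B', K y
            ≤ ∫⁻ _ in A \ B', ENNReal.ofReal (r ^ (-α)) := by
              refine setLIntegral_mono' (hA.diff measurableSet_closedBall) fun y hy => ?_
              apply ENNReal.ofReal_le_ofReal
              have : r ≤ ‖x - y‖ := by
                have := hy.2
                rw [hB'def, mem_closedBall, not_le] at this
                rw [dist_comm, dist_eq_norm] at this
                exact this.le
              exact Real.rpow_le_rpow_of_nonpos hr this (neg_nonpos.2 hα₀.le)
          _ = ENNReal.ofReal (r ^ (-α)) * volume (A \ B') := setLIntegral_const _ _
          _ ≤ ENNReal.ofReal (r ^ (-α)) * volume (B' \ A) := mul_le_mul_right hmeasle _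
          _ = ∫⁻ _ in B' \ A, ENNReal.ofReal (r ^ (-α)) := (setLIntegral_const _ _).symm
          _ ≤ ∫⁻ y in B' \ A, K y := by
              refine lintegral_mono_ae ?_
              have hx0 : ∀ᵐ y ∂(volume.restrict (B' \ A)), y ≠ x :=
                ae_restrict_of_ae (by
                  rw [ae_iff]
                  simpa using measure_singleton (μ := (volume : Measure (EuclideanSpace ℝ (Fin n)))) x)
              filter_upwards [ae_restrict_mem (measurableSet_closedBall.diff hA), hx0]
                with y hy hyx
              apply ENNReal.ofReal_le_ofReal
              have h1 : ‖x - y‖ ≤ r := by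
                have := hy.1
                rw [hB'def, mem_closedBall, dist_comm, dist_eq_norm] at this
                exact this
              have h0 : 0 < ‖x - y‖ := by
                rw [norm_pos_iff, sub_ne_zero]
                exact (Ne.symm hyx)
              exact Real.rpow_le_rpow_of_nonpos h0 h1 (neg_nonpos.2 hα₀.le)
    _ = ∫⁻ y in (A ∩ B') ∪ (B' \ A), K y :=
        (lintegral_union (measurableSet_closedBall.diff hA) hdisj2).symm
    _ ≤ ∫⁻ y in B', K y :=
        lintegral_mono_set (union_subset inter_subset_right diff_subset)
    _ ≤ ENNReal.ofReal (((n:ℝ) / ((n : ℝ) - α)) * ω * r ^ ((n : ℝ) - α)) :=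
        lintegral_closedBall_le hn hα₀ hα₁ x hr
    _ = ENNReal.ofReal (((n : ℝ) / ((n : ℝ) - α)) * ω ^ (α / (n : ℝ)) *
          m ^ (((n : ℝ) - α) / (n : ℝ))) := by
        congr 1
        have e1 : r ^ ((n:ℝ) - α) = m ^ (((n:ℝ) - α)/n) / ω ^ (((n:ℝ) - α)/n) := by
          rw [hrdef, ← Real.rpow_mul (div_pos hm hω0).le, ← Real.div_rpow hm.le hω0.le]
          congr 1
          field_simp
        rw [e1]
        have e2 : ω * (m ^ (((n:ℝ) - α)/n) / ω ^ (((n:ℝ) - α)/n))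
            = ω ^ (α / (n:ℝ)) * m ^ (((n:ℝ) - α)/n) := by
          rw [mul_div_assoc']
          rw [eq_comm, mul_comm ω, mul_comm _ (m ^ _), mul_div_assoc]
          congr 1
          rw [eq_div_iff (Real.rpow_pos_of_pos hω0 _).ne', ← Real.rpow_add hω0]
          rw [show α / (n:ℝ) + ((n:ℝ) - α)/n = 1 by field_simp; ring, Real.rpow_one]
        rw [mul_assoc, e2]
        ring

lemma kernel_meas (α : ℝ) :
    Measurable (fun p : EuclideanSpace ℝ (Fin n) × EuclideanSpace ℝ (Fin n) =>
      ENNReal.ofReal (‖p.1 - p.2‖ ^ (-α))) := by fun_prop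

lemma inner_meas (α : ℝ) (S : Set (EuclideanSpace ℝ (Fin n))) :
    Measurable (fun x : EuclideanSpace ℝ (Fin n) =>
      ∫⁻ y in S, ENNReal.ofReal (‖x - y‖ ^ (-α))) :=
  Measurable.lintegral_prod_right' (kernel_meas α)

lemma swap_int (α : ℝ) (S T : Set (EuclideanSpace ℝ (Fin n))) :
    ∫⁻ x in S, ∫⁻ y in T, ENNReal.ofReal (‖x - y‖ ^ (-α)) =
      ∫⁻ y in T, ∫⁻ x in S, ENNReal.ofReal (‖x - y‖ ^ (-α)) :=
  lintegral_lintegral_swap (kernel_meas α).aemeasurable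

lemma pot_le' (hn : 0 < n) {α : ℝ} (hα₀ : 0 < α) (hα₁ : α < n) {m : ℝ} (hm : 0 < m)
    {A : Set (EuclideanSpace ℝ (Fin n))} (hA : MeasurableSet A)
    (hAm : volume A ≤ ENNReal.ofReal m) (y : EuclideanSpace ℝ (Fin n)) :
    ∫⁻ x in A, ENNReal.ofReal (‖x - y‖ ^ (-α)) ≤
      ENNReal.ofReal (((n : ℝ) / ((n : ℝ) - α)) * unitBallVol n ^ (α / (n : ℝ)) *
        m ^ (((n : ℝ) - α) / (n : ℝ))) := by
  simp_rw [norm_sub_rev]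
  exact pot_le hn hα₀ hα₁ hm hA hAm y

lemma energy_compare (hn : 0 < n) {α : ℝ} (hα₀ : 0 < α) (hα₁ : α < n) {m : ℝ} (hm : 0 < m)
    {A B : Set (EuclideanSpace ℝ (Fin n))} (hA : MeasurableSet A) (hB : MeasurableSet B)
    (hAm : volume A ≤ ENNReal.ofReal m) (hBm : volume B ≤ ENNReal.ofReal m) :
    (∫⁻ x in A, ∫⁻ y in A, ENNReal.ofReal (‖x - y‖ ^ (-α))) ≤
      (∫⁻ x in B, ∫⁻ y in B, ENNReal.ofReal (‖x - y‖ ^ (-α)))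
      + ENNReal.ofReal (((n : ℝ) / ((n : ℝ) - α)) * unitBallVol n ^ (α / (n : ℝ)) *
          m ^ (((n : ℝ) - α) / (n : ℝ))) * volume (A \ B)
      + ENNReal.ofReal (((n : ℝ) / ((n : ℝ) - α)) * unitBallVol n ^ (α / (n : ℝ)) *
          m ^ (((n : ℝ) - α) / (n : ℝ))) * volume (A \ B) := by
  set C := ((n : ℝ) / ((n : ℝ) - α)) * unitBallVol n ^ (α / (n : ℝ)) *
    m ^ (((n : ℝ) - α) / (n : ℝ)) with hC
  have hABm : volume (A ∩ B) ≤ ENNReal.ofReal m :=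
    (measure_mono inter_subset_left).trans hAm
  have hsplit : ∀ x : EuclideanSpace ℝ (Fin n),
      ∫⁻ y in A, ENNReal.ofReal (‖x - y‖ ^ (-α)) =
        (∫⁻ y in A ∩ B, ENNReal.ofReal (‖x - y‖ ^ (-α)))
        + ∫⁻ y in A \ B, ENNReal.ofReal (‖x - y‖ ^ (-α)) := by
    intro x
    rw [← lintegral_union (hA.diff hB)
      (disjoint_sdiff_self_right.mono_left inter_subset_right), inter_union_diff]
  calc ∫⁻ x in A, ∫⁻ y in A, ENNReal.ofReal (‖x - y‖ ^ (-α))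
      = (∫⁻ x in A, ∫⁻ y in A ∩ B, ENNReal.ofReal (‖x - y‖ ^ (-α)))
        + ∫⁻ x in A, ∫⁻ y in A \ B, ENNReal.ofReal (‖x - y‖ ^ (-α)) := by
        rw [← lintegral_add_left (inner_meas α (A ∩ B))]
        exact lintegral_congr hsplit
    _ ≤ ((∫⁻ x in B, ∫⁻ y in B, ENNReal.ofReal (‖x - y‖ ^ (-α)))
          + ENNReal.ofReal C * volume (A \ B))
        + ENNReal.ofReal C * volume (A \ B) := by
        gcongr ?_ + ?_
        · -- first piece: split the outer integral
          calc ∫⁻ x in A, ∫⁻ y in A ∩ B, ENNReal.ofReal (‖x - y‖ ^ (-α))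
              = (∫⁻ x in A ∩ B, ∫⁻ y in A ∩ B, ENNReal.ofReal (‖x - y‖ ^ (-α)))
                + ∫⁻ x in A \ B, ∫⁻ y in A ∩ B, ENNReal.ofReal (‖x - y‖ ^ (-α)) := by
                rw [← lintegral_union (hA.diff hB)
                  (disjoint_sdiff_self_right.mono_left inter_subset_right), inter_union_diff]
            _ ≤ (∫⁻ x in B, ∫⁻ y in B, ENNReal.ofReal (‖x - y‖ ^ (-α)))
                + ENNReal.ofReal C * volume (A \ B) := by
                gcongr ?_ + ?_
                · calc ∫⁻ x in A ∩ B, ∫⁻ y in A ∩ B, ENNReal.ofReal (‖x - y‖ ^ (-α))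
                      ≤ ∫⁻ x in A ∩ B, ∫⁻ y in B, ENNReal.ofReal (‖x - y‖ ^ (-α)) :=
                        lintegral_mono fun x => lintegral_mono_set inter_subset_right
                    _ ≤ ∫⁻ x in B, ∫⁻ y in B, ENNReal.ofReal (‖x - y‖ ^ (-α)) :=
                        lintegral_mono_set inter_subset_right
                · calc ∫⁻ x in A \ B, ∫⁻ y in A ∩ B, ENNReal.ofReal (‖x - y‖ ^ (-α))
                      ≤ ∫⁻ _ in A \ B, ENNReal.ofReal C :=
                        lintegral_mono fun x => pot_le hn hα₀ hα₁ hm (hA.inter hB) hABm x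
                    _ = ENNReal.ofReal C * volume (A \ B) := setLIntegral_const _ _
        · -- second piece: swap the order of integration
          calc ∫⁻ x in A, ∫⁻ y in A \ B, ENNReal.ofReal (‖x - y‖ ^ (-α))
              = ∫⁻ y in A \ B, ∫⁻ x in A, ENNReal.ofReal (‖x - y‖ ^ (-α)) := swap_int α _ _
            _ ≤ ∫⁻ _ in A \ B, ENNReal.ofReal C :=
                lintegral_mono fun y => pot_le' hn hα₀ hα₁ hm hA hAm y
            _ = ENNReal.ofReal C * volume (A \ B) := setLIntegral_const _ _

lemma rieszEnergy_eq (hn : 0 < n) {α : ℝ} (hα₀ : 0 < α) (hα₁ : α < n) {m : ℝ} (hm : 0 < m)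
    {S : Set (EuclideanSpace ℝ (Fin n))} (hS : MeasurableSet S)
    (hSm : volume S ≤ ENNReal.ofReal m) :
    rieszEnergy α S = (∫⁻ x in S, ∫⁻ y in S, ENNReal.ofReal (‖x - y‖ ^ (-α))).toReal := by
  rw [rieszEnergy]
  have h1 : ∀ x : EuclideanSpace ℝ (Fin n), ∫ y in S, ‖x - y‖ ^ (-α) =
      (∫⁻ y in S, ENNReal.ofReal (‖x - y‖ ^ (-α))).toReal := fun x =>
    integral_eq_lintegral_of_nonneg_ae (ae_of_all _ fun y => Real.rpow_nonneg (norm_nonneg _) _)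
      (kernel_meas1 α x).aestronglyMeasurable
  simp_rw [h1]
  rw [integral_eq_lintegral_of_nonneg_ae (ae_of_all _ fun x => ENNReal.toReal_nonneg)
    ((inner_meas α S).ennreal_toReal.aestronglyMeasurable)]
  congr 1
  refine lintegral_congr fun x => ENNReal.ofReal_toReal ?_
  exact ((pot_le hn hα₀ hα₁ hm hS hSm x).trans_lt ENNReal.ofReal_lt_top).ne

/-- Lipschitz continuity of the Riesz energy with respect to symmetric difference:
for measurable `E, F ⊆ ℝⁿ` with `|E| ≤ |F| = m`,
`|V(E) − V(F)| ≤ (2 n ω_n^{α/n}/(n−α)) m^{(n−α)/n} |E △ F|`. -/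
theorem rieszEnergy_lipschitz
    (n : ℕ) (hn : 2 ≤ n) (α : ℝ) (hα₀ : 0 < α) (hα₁ : α < n) (m : ℝ) (hm : 0 < m)
    (E F : Set (EuclideanSpace ℝ (Fin n))) (hE : MeasurableSet E) (hF : MeasurableSet F)
    (hEF : volume E ≤ volume F) (hFm : volume F = ENNReal.ofReal m) :
    |rieszEnergy α E - rieszEnergy α F| ≤
      (2 * n * unitBallVol n ^ (α / n) / ((n : ℝ) - α)) * m ^ (((n : ℝ) - α) / n) *
        (volume (symmDiff E F)).toReal := by
  have hn0 : 0 < n := lt_of_lt_of_le two_pos hn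
  have hα₁' : (α : ℝ) < (n : ℝ) := hα₁
  have hnα : (0:ℝ) < (n : ℝ) - α := by linarith
  have hEm : volume E ≤ ENNReal.ofReal m := hFm ▸ hEF
  have hFm' : volume F ≤ ENNReal.ofReal m := le_of_eq hFm
  set C : ℝ := ((n : ℝ) / ((n : ℝ) - α)) * unitBallVol n ^ (α / (n : ℝ)) *
    m ^ (((n : ℝ) - α) / (n : ℝ)) with hC
  have hC0 : 0 ≤ C := by
    apply mul_nonneg (mul_nonneg (div_nonneg (Nat.cast_nonneg n) hnα.le)
      (Real.rpow_nonneg (ENNReal.toReal_nonneg) _)) (Real.rpow_nonneg hm.le _)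
  set IE := ∫⁻ x in E, ∫⁻ y in E, ENNReal.ofReal (‖x - y‖ ^ (-α)) with hIE
  set IF := ∫⁻ x in F, ∫⁻ y in F, ENNReal.ofReal (‖x - y‖ ^ (-α)) with hIF
  have hbound : ∀ (S : Set (EuclideanSpace ℝ (Fin n))), MeasurableSet S →
      volume S ≤ ENNReal.ofReal m →
      (∫⁻ x in S, ∫⁻ y in S, ENNReal.ofReal (‖x - y‖ ^ (-α))) ≠ ⊤ := by
    intro S hS hSm
    have : (∫⁻ x in S, ∫⁻ y in S, ENNReal.ofReal (‖x - y‖ ^ (-α))) ≤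
        ENNReal.ofReal C * volume S := by
      rw [← setLIntegral_const]
      exact lintegral_mono fun x => pot_le hn0 hα₀ hα₁ hm hS hSm x
    refine (this.trans_lt ?_).ne
    exact ENNReal.mul_lt_top ENNReal.ofReal_lt_top
      (hSm.trans_lt ENNReal.ofReal_lt_top)
  have hIEne : IE ≠ ⊤ := hbound E hE hEm
  have hIFne : IF ≠ ⊤ := hbound F hF hFm'
  set Δ := volume (symmDiff E F) with hΔ
  have hΔne : Δ ≠ ⊤ := by
    refine (le_trans (measure_mono symmDiff_subset_union) (measure_union_le E F)).trans_lt ?_ |>.ne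
    rw [hFm]
    exact ENNReal.add_lt_top.2 ⟨hEm.trans_lt ENNReal.ofReal_lt_top, ENNReal.ofReal_lt_top⟩
  set D := ENNReal.ofReal C * Δ with hD
  have hDne : D ≠ ⊤ := ENNReal.mul_ne_top ENNReal.ofReal_ne_top hΔne
  have hEdiff : volume (E \ F) ≤ Δ := measure_mono (by rw [symmDiff_def]; exact subset_union_left)
  have hFdiff : volume (F \ E) ≤ Δ := measure_mono (by rw [symmDiff_def]; exact subset_union_right)
  have key1 : IE ≤ IF + D + D := by
    refine (energy_compare hn0 hα₀ hα₁ hm hE hF hEm hFm').trans ?_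
    gcongr IF + ?_ + ?_ <;> exact mul_le_mul_right hEdiff _
  have key2 : IF ≤ IE + D + D := by
    refine (energy_compare hn0 hα₀ hα₁ hm hF hE hFm' hEm).trans ?_
    gcongr IE + ?_ + ?_ <;> exact mul_le_mul_right hFdiff _
  have hDval : D.toReal = C * Δ.toReal := by
    rw [hD, ENNReal.toReal_mul, ENNReal.toReal_ofReal hC0]
  have htarget : (2 * n * unitBallVol n ^ (α / (n:ℝ)) / ((n : ℝ) - α)) *
      m ^ (((n : ℝ) - α) / (n:ℝ)) * Δ.toReal = 2 * (C * Δ.toReal) := by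
    rw [hC]; ring
  rw [rieszEnergy_eq hn0 hα₀ hα₁ hm hE hEm, rieszEnergy_eq hn0 hα₀ hα₁ hm hF hFm',
    ← hIE, ← hIF, htarget]
  have t1 : IE.toReal ≤ IF.toReal + D.toReal + D.toReal := by
    rw [← ENNReal.toReal_add hIFne hDne,
      ← ENNReal.toReal_add (ENNReal.add_ne_top.2 ⟨hIFne, hDne⟩) hDne]
    exact ENNReal.toReal_mono (by finiteness) key1
  have t2 : IF.toReal ≤ IE.toReal + D.toReal + D.toReal := by
    rw [← ENNReal.toReal_add hIEne hDne,
      ← ENNReal.toReal_add (ENNReal.add_ne_top.2 ⟨hIEne, hDne⟩) hDne]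
    exact ENNReal.toReal_mono (by finiteness) key2
  rw [abs_sub_le_iff]
  constructor <;> [skip; skip] <;> rw [← hDval] <;> linarith
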